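/- Let a_1,…,a_n ∈ ℝ^m be nonzero vectors and suppose R ∈ ℝ^{m×m} can be written as R = αI_m + Σ_{i=1}^n γ_i·â_iâ_iᵀ with 0 < α ≤ 1 and γ_i ≥ 0 for all i, and suppose det(R) > 1. Let Q = R⁻¹. Then there exists k ∈ [n] such that ‖â_k‖_Q ≤ (det(R)^{1/m} − 1)^{−1/2}. -/

import Mathlib

open Matrix Set MeasureTheory Pointwise ENNReal

noncomputable section

/-- Euclidean dot product on `Fin d → ℝ`. -/
def dotp {d : ℕ} (u v : Fin d → ℝ) : ℝ := ∑ i, u i * v i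

/-- Euclidean norm on `Fin d → ℝ`. -/
def norm2 {d : ℕ} (v : Fin d → ℝ) : ℝ := Real.sqrt (∑ i, v i ^ 2)

/-- Normalization `v / ‖v‖`, with the convention that `0` is mapped to `0`. -/
def nml {d : ℕ} (v : Fin d → ℝ) : Fin d → ℝ := (norm2 v)⁻¹ • v

/-- The `j`-th column of a matrix. -/
def mcol {d : ℕ} {ι : Type} (A : Matrix (Fin d) ι ℝ) (j : ι) : Fin d → ℝ := fun i => A i j

/-- Goffin's condition measure `ρ_A = max_{y ∈ im(A) \ {0}} min_j â_jᵀ ŷ`. -/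
def goffin {d : ℕ} {ι : Type} [Fintype ι] (A : Matrix (Fin d) ι ℝ) : ℝ :=
  sSup { r : ℝ | ∃ y : Fin d → ℝ, (∃ x : ι → ℝ, A.mulVec x = y) ∧ y ≠ 0 ∧
    r = ⨅ j : ι, dotp (nml (mcol A j)) (nml y) }

/-- The cone `Σ_A = {y : Aᵀ y ≥ 0}`. -/
def SigmaCone {d : ℕ} {ι : Type} (A : Matrix (Fin d) ι ℝ) : Set (Fin d → ℝ) :=
  { y | ∀ j, 0 ≤ dotp (mcol A j) y }

/-- `F_A = Σ_A ∩ B^d`. -/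
def FA {d : ℕ} {ι : Type} (A : Matrix (Fin d) ι ℝ) : Set (Fin d → ℝ) :=
  SigmaCone A ∩ { z | norm2 z ≤ 1 }

/-- `‖v‖_M = √(vᵀ M v)`. -/
def qnorm {d : ℕ} (M : Matrix (Fin d) (Fin d) ℝ) (v : Fin d → ℝ) : ℝ :=
  Real.sqrt (dotp v (M.mulVec v))

/-- The ellipsoid `E(M) = {z : ‖z‖_M ≤ 1}`. -/
def ell {d : ℕ} (M : Matrix (Fin d) (Fin d) ℝ) : Set (Fin d → ℝ) :=
  { z | qnorm M z ≤ 1 }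

/-- The width of a set `X` along `a`: `sup {aᵀz : z ∈ X}`. -/
def widthOf {d : ℕ} (X : Set (Fin d → ℝ)) (a : Fin d → ℝ) : ℝ :=
  sSup { r : ℝ | ∃ z ∈ X, r = dotp a z }

/-- `P_A = conv(â_1,…,â_n) ∩ (−conv(â_1,…,â_n))`. -/
def PA {d : ℕ} {ι : Type} (A : Matrix (Fin d) ι ℝ) : Set (Fin d → ℝ) :=
  convexHull ℝ (Set.range fun j => nml (mcol A j)) ∩
    (-(convexHull ℝ (Set.range fun j => nml (mcol A j))))

/-- `Δ_A`: maximum of `∏_{j ∈ B} ‖a_j‖` over sets `B` of linearly independent columns. -/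
def DeltaA {d n : ℕ} (A : Matrix (Fin d) (Fin n) ℝ) : ℝ :=
  sSup { p : ℝ | ∃ B : Finset (Fin n),
    LinearIndependent ℝ (fun j : {x // x ∈ B} => mcol A j.1) ∧ p = ∏ j ∈ B, norm2 (mcol A j) }

/-- `T*_A`: indices `i` such that some `y` with `Aᵀy ≥ 0` has `a_iᵀ y > 0`. -/
def TstarA {d : ℕ} {ι : Type} (A : Matrix (Fin d) ι ℝ) : Set ι :=
  { i | ∃ y : Fin d → ℝ, (∀ j, 0 ≤ dotp (mcol A j) y) ∧ 0 < dotp (mcol A i) y }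

/-- `S*_A`: indices `i` such that some `x ≥ 0` with `Ax = 0` has `x_i > 0`. -/
def SstarA {d : ℕ} {ι : Type} [Fintype ι] (A : Matrix (Fin d) ι ℝ) : Set ι :=
  { i | ∃ x : ι → ℝ, (∀ j, 0 ≤ x j) ∧ A.mulVec x = 0 ∧ 0 < x i }

/-- `ω_A = min_{i ∈ T*_A} width_{F_A}(â_i)`. -/
def omegaA {d : ℕ} {ι : Type} (A : Matrix (Fin d) ι ℝ) : ℝ :=
  sInf ((fun i => widthOf (FA A) (nml (mcol A i))) '' TstarA A)

lemma trace_mul_vecMulVec' {d : ℕ} (Q : Matrix (Fin d) (Fin d) ℝ) (u : Fin d → ℝ) :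
    (Q * vecMulVec u u).trace = u ⬝ᵥ Q *ᵥ u := by
  simp only [Matrix.trace, Matrix.diag, Matrix.mul_apply, vecMulVec_apply, dotProduct, mulVec,
    Finset.mul_sum]
  exact Finset.sum_congr rfl fun i _ => Finset.sum_congr rfl fun j _ => by ring

lemma posSemidef_vecMulVec' {d : ℕ} (u : Fin d → ℝ) : (vecMulVec u u).PosSemidef := by
  refine Matrix.PosSemidef.of_dotProduct_mulVec_nonneg ?_ ?_
  · ext i j
    simp [conjTranspose_apply, vecMulVec_apply, mul_comm]
  · intro x
    have h : star x ⬝ᵥ (vecMulVec u u) *ᵥ x = (u ⬝ᵥ x) * (u ⬝ᵥ x) := by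
      simp only [star_trivial, dotProduct, mulVec, vecMulVec_apply, Finset.mul_sum,
        Finset.sum_mul]
      rw [Finset.sum_comm]
      exact Finset.sum_congr rfl fun i _ => Finset.sum_congr rfl fun j _ => by ring
    rw [h]
    exact mul_self_nonneg _

lemma sum_sq_nml' {d : ℕ} {v : Fin d → ℝ} (hv : v ≠ 0) : ∑ j, nml v j * nml v j = 1 := by
  obtain ⟨j0, hj0⟩ := Function.ne_iff.mp hv
  have hs : 0 < ∑ j, v j ^ 2 :=
    Finset.sum_pos' (fun j _ => sq_nonneg _) ⟨j0, Finset.mem_univ _, pow_pos (abs_pos.mpr hj0) 2 |> (by simpa [sq_abs] using ·)⟩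
  have hsqrt : Real.sqrt (∑ j, v j ^ 2) * Real.sqrt (∑ j, v j ^ 2) = ∑ j, v j ^ 2 :=
    Real.mul_self_sqrt hs.le
  have hne : Real.sqrt (∑ j, v j ^ 2) ≠ 0 := by positivity
  simp only [nml, norm2, Pi.smul_apply, smul_eq_mul]
  have : ∑ j, (Real.sqrt (∑ k, v k ^ 2))⁻¹ * v j * ((Real.sqrt (∑ k, v k ^ 2))⁻¹ * v j)
      = (Real.sqrt (∑ k, v k ^ 2))⁻¹ * (Real.sqrt (∑ k, v k ^ 2))⁻¹ * ∑ j, v j ^ 2 := by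
    rw [Finset.mul_sum]
    exact Finset.sum_congr rfl fun j _ => by ring
  rw [this, ← mul_inv, hsqrt, inv_mul_cancel₀ hs.ne']


set_option maxHeartbeats 1000000 in
/-- Lemma 4.8: if `R = α I + Σᵢ γᵢ âᵢâᵢᵀ` with `0 < α ≤ 1`, `γ ≥ 0`, and `det(R) > 1`,
then some column satisfies `‖â_k‖_Q ≤ (det(R)^{1/m} − 1)^{−1/2}`, where `Q = R⁻¹`. -/
theorem exists_small_qnorm_col
    {m n : ℕ} (a : Fin n → Fin m → ℝ) (ha : ∀ i, a i ≠ 0)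
    (α : ℝ) (hα0 : 0 < α) (hα1 : α ≤ 1)
    (γ : Fin n → ℝ) (hγ : ∀ i, 0 ≤ γ i)
    (R : Matrix (Fin m) (Fin m) ℝ)
    (hR : R = α • (1 : Matrix (Fin m) (Fin m) ℝ) +
      ∑ i, γ i • vecMulVec (nml (a i)) (nml (a i)))
    (hdet : 1 < R.det) :
    ∃ k : Fin n, qnorm R⁻¹ (nml (a k)) ≤ 1 / Real.sqrt (R.det ^ ((1 : ℝ) / m) - 1) := by
  classical
  have hm : 0 < m := by
    rcases Nat.eq_zero_or_pos m with h | h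
    · subst h; simp [Matrix.det_fin_zero] at hdet
    · exact h
  set u : Fin n → Fin m → ℝ := fun i => nml (a i) with hu_def
  have hu : ∀ i, ∑ j, u i j * u i j = 1 := fun i => sum_sq_nml' (ha i)
  -- R is positive definite
  have hRpd : R.PosDef := by
    rw [hR]
    apply Matrix.PosDef.add_posSemidef
    · have h1 : (α • (1 : Matrix (Fin m) (Fin m) ℝ)) = Matrix.diagonal (fun _ => α) := by
        ext i j
        by_cases h : i = j <;> simp [Matrix.one_apply, Matrix.diagonal_apply, h]
      rw [h1]
      exact Matrix.posDef_diagonal_iff.mpr fun _ => hα0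
    · apply Finset.sum_induction _ Matrix.PosSemidef
        (fun A B hA hB => hA.add hB) Matrix.PosSemidef.zero
      intro i _
      refine Matrix.PosSemidef.of_dotProduct_mulVec_nonneg ?_ ?_
      · show _ᴴ = _
        rw [Matrix.conjTranspose_smul, (posSemidef_vecMulVec' (u i)).1.eq]
        simp
        rfl
      · intro x
        rw [smul_mulVec, dotProduct_smul, smul_eq_mul]
        exact mul_nonneg (hγ i) ((posSemidef_vecMulVec' (u i)).dotProduct_mulVec_nonneg x)
  have hdet0 : 0 < R.det := hRpd.det_pos
  have hQpd : R⁻¹.PosDef := hRpd.inv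
  set Q := R⁻¹ with hQ_def
  -- trace identities
  have hQR : Q * R = 1 := Matrix.nonsing_inv_mul R (isUnit_iff_ne_zero.mpr hdet0.ne')
  have htrQR : (Q * R).trace = (m : ℝ) := by rw [hQR, Matrix.trace_one]; simp
  have hexpand : Q * R = α • Q + ∑ i, γ i • (Q * vecMulVec (u i) (u i)) := by
    conv_lhs => rw [hR]
    rw [Matrix.mul_add, Finset.mul_sum]
    congr 1
    · rw [Matrix.mul_smul, Matrix.mul_one]
    · exact Finset.sum_congr rfl fun i _ => by rw [Matrix.mul_smul]
  have htrace_id : (m : ℝ) = α * Q.trace + ∑ i, γ i * (u i ⬝ᵥ Q *ᵥ u i) := by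
    rw [← htrQR, hexpand, Matrix.trace_add, Matrix.trace_smul, Matrix.trace_sum]
    simp only [Matrix.trace_smul, trace_mul_vecMulVec', smul_eq_mul]
  -- trace of Q positive
  have hQtrace : 0 < Q.trace := by
    have hdiag : ∀ i, 0 < Q i i := by
      intro i
      have hx : (Pi.single i 1 : Fin m → ℝ) ≠ 0 := by
        intro h
        have := congr_fun h i
        simp at this
      have := hQpd.dotProduct_mulVec_pos hx
      simpa [dotProduct, mulVec, Pi.single_apply, Finset.sum_ite_eq, mul_comm] using this
    exact Finset.sum_pos (fun i _ => hdiag i) ⟨⟨0, hm⟩, Finset.mem_univ _⟩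
  -- eigenvalue facts
  have herm := hRpd.isHermitian
  have hev := hRpd.eigenvalues_pos
  have htraceR : R.trace = ∑ i, herm.eigenvalues i := by
    have h2 : (herm.eigenvectorUnitary : Matrix (Fin m) (Fin m) ℝ) *
        star (herm.eigenvectorUnitary : Matrix (Fin m) (Fin m) ℝ) = 1 :=
      (Matrix.mem_unitaryGroup_iff).mp herm.eigenvectorUnitary.2
    have key : (star (herm.eigenvectorUnitary : Matrix (Fin m) (Fin m) ℝ) * R *
        (herm.eigenvectorUnitary : Matrix (Fin m) (Fin m) ℝ)).trace
        = ∑ i, herm.eigenvalues i := by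
      rw [Matrix.trace_mul_cycle, h2, Matrix.one_mul, herm.trace_eq_sum_eigenvalues]
      simp
    rw [Matrix.trace_mul_cycle, h2, Matrix.one_mul] at key
    exact key
  have hdetprod : R.det = ∏ i, herm.eigenvalues i := by
    have := herm.det_eq_prod_eigenvalues
    simpa using this
  -- AM-GM
  set t : ℝ := R.det ^ ((1 : ℝ) / m) with ht_def
  have hamgm : (m : ℝ) * t ≤ R.trace := by
    have hw : ∀ i ∈ (Finset.univ : Finset (Fin m)), (0:ℝ) ≤ (1 : ℝ) / m := fun _ _ => by positivity
    have hw' : ∑ _i : Fin m, (1 : ℝ) / m = 1 := by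
      rw [Finset.sum_const, Finset.card_univ, Fintype.card_fin, nsmul_eq_mul]
      field_simp
    have hz : ∀ i ∈ (Finset.univ : Finset (Fin m)), (0:ℝ) ≤ herm.eigenvalues i := fun i _ => (hev i).le
    have h := Real.geom_mean_le_arith_mean_weighted Finset.univ (fun _ => (1:ℝ)/m)
      (fun i => herm.eigenvalues i) hw hw' hz
    have hprod : ∏ i : Fin m, herm.eigenvalues i ^ ((1:ℝ)/m) = t := by
      rw [Real.finset_prod_rpow _ _ hz, ← hdetprod]
    rw [hprod] at h
    have hsum : ∑ i : Fin m, (1:ℝ)/m * herm.eigenvalues i = R.trace / m := by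
      rw [htraceR, Finset.sum_div]
      exact Finset.sum_congr rfl fun i _ => by ring
    rw [hsum] at h
    calc (m : ℝ) * t ≤ (m:ℝ) * (R.trace / m) := by
          apply mul_le_mul_of_nonneg_left h (by positivity)
      _ = R.trace := by field_simp
  have ht1 : 1 < t := by
    rw [ht_def]
    have hmr : (0:ℝ) < m := Nat.cast_pos.mpr hm
    exact (Real.one_lt_rpow_iff_of_pos hdet0).mpr (Or.inl ⟨hdet, by positivity⟩)
  -- trace of R
  have htraceR2 : R.trace = α * m + ∑ i, γ i := by
    rw [hR, Matrix.trace_add, Matrix.trace_smul, Matrix.trace_one, Matrix.trace_sum]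
    simp only [Matrix.trace_smul, smul_eq_mul]
    congr 1
    · simp
    · refine Finset.sum_congr rfl fun i _ => ?_
      have : (vecMulVec (u i) (u i)).trace = 1 := by
        simp only [Matrix.trace, Matrix.diag, vecMulVec_apply]
        exact hu i
      rw [this, mul_one]
  have hγsum : (m : ℝ) * (t - 1) ≤ ∑ i, γ i := by
    have h1 : (m : ℝ) * t ≤ α * m + ∑ i, γ i := by rw [← htraceR2]; exact hamgm
    have hmr : (0:ℝ) < m := by exact_mod_cast hm
    have h2 : α * m ≤ m := by nlinarith
    nlinarith
  -- by contradiction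
  by_contra hcon
  push_neg at hcon
  have ht0 : (0:ℝ) < t - 1 := by linarith
  have hq : ∀ k, 1 / (t - 1) < u k ⬝ᵥ Q *ᵥ u k := by
    intro k
    have h := hcon k
    have hqnn : 0 ≤ u k ⬝ᵥ Q *ᵥ u k := by
      have := hQpd.posSemidef.dotProduct_mulVec_nonneg (u k)
      simpa using this
    have heq : qnorm Q (u k) = Real.sqrt (u k ⬝ᵥ Q *ᵥ u k) := rfl
    rw [heq] at h
    have h1 : Real.sqrt (1 / (t - 1)) = 1 / Real.sqrt (t - 1) := by
      rw [one_div, one_div, Real.sqrt_inv]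
    rw [← h1] at h
    have := (Real.sqrt_lt_sqrt_iff (by positivity)).mp h
    exact this
  have hsum_lt : ∑ i, γ i * (u i ⬝ᵥ Q *ᵥ u i) < (m : ℝ) := by
    have : 0 < α * Q.trace := mul_pos hα0 hQtrace
    linarith [htrace_id]
  have hsum_ge : (m : ℝ) ≤ ∑ i, γ i * (u i ⬝ᵥ Q *ᵥ u i) := by
    have h1 : ∑ i, γ i * (1 / (t - 1)) ≤ ∑ i, γ i * (u i ⬝ᵥ Q *ᵥ u i) :=
      Finset.sum_le_sum fun i _ => mul_le_mul_of_nonneg_left (hq i).le (hγ i)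
    have h2 : ∑ i, γ i * (1 / (t - 1)) = (∑ i, γ i) * (1 / (t - 1)) := by
      rw [Finset.sum_mul]
    have h3 : (m : ℝ) * (t - 1) * (1 / (t - 1)) ≤ (∑ i, γ i) * (1 / (t - 1)) :=
      mul_le_mul_of_nonneg_right hγsum (by positivity)
    have h4 : (m : ℝ) * (t - 1) * (1 / (t - 1)) = m := by field_simp
    linarith
  linarith
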